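/- For every constant K ≥ 1 there exists a constant C = C(K) > 0 with the following property. Let X ∈ ℝ^{d_in×r} have rank r, let κ = σ_max(X)²/σ_min(X)², and let W_1(0), …, W_L(0) be weight matrices of a depth-L width-m linear network satisfying ‖W_{b:a}(0)‖ ≤ K·√L·m^{(b−a+1)/2} for all 1 < a ≤ b < L and σ_max(W_{a:1}(0)·X) ≤ 1.2·m^{a/2}·σ_max(X) for all 1 ≤ a < L. Let R > 0, let Δ_1, …, Δ_L be matrices of matching shapes with ‖Δ_i‖_F ≤ R for every i, and set W_i = W_i(0) + Δ_i. If m ≥ C·L³·R²·κ, then for all 1 ≤ i < L, ‖(W_{i:1} − W_{i:1}(0))·X‖ ≤ 0.05·m^{i/2}·σ_min(X). -/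

import Mathlib

open MeasureTheory ProbabilityTheory Matrix
open scoped BigOperators ENNReal

noncomputable section

/-- `W_j * W_{j-1} * ⋯ * W_i` for a family of square matrices (identity if `j < i`). -/
def midProd {m : ℕ} (W : ℕ → Matrix (Fin m) (Fin m) ℝ) (i j : ℕ) :
    Matrix (Fin m) (Fin m) ℝ :=
  (((List.range' i (j + 1 - i)).reverse).map W).prod

/-- Euclidean norm of a vector. -/
def enorm' {a : ℕ} (v : Fin a → ℝ) : ℝ := Real.sqrt (∑ i, v i ^ 2)

/-- Largest singular value (spectral norm): supremum of `‖A v‖` over unit vectors `v`. -/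
def smax {a b : ℕ} (A : Matrix (Fin a) (Fin b) ℝ) : ℝ :=
  ⨆ v : {v : Fin b → ℝ // ∑ j, v j ^ 2 = 1}, enorm' (A.mulVec v.1)

/-- Smallest singular value: infimum of `‖A v‖` over unit vectors `v`. -/
def smin {a b : ℕ} (A : Matrix (Fin a) (Fin b) ℝ) : ℝ :=
  ⨅ v : {v : Fin b → ℝ // ∑ j, v j ^ 2 = 1}, enorm' (A.mulVec v.1)

/-- Squared Frobenius norm of a matrix. -/
def frobSq {a b : ℕ} (A : Matrix (Fin a) (Fin b) ℝ) : ℝ := ∑ i, ∑ j, A i j ^ 2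

/-- Frobenius norm of a matrix. -/
def frob {a b : ℕ} (A : Matrix (Fin a) (Fin b) ℝ) : ℝ := Real.sqrt (frobSq A)

/-- Index type for all the entries of the weight matrices
`W_1 ∈ ℝ^{m×din}`, `W_2, …, W_{L-1} ∈ ℝ^{m×m}`, `W_L ∈ ℝ^{dout×m}`. -/
def InitIdx (L m din dout : ℕ) : Type :=
  (Fin m × Fin din) ⊕ (({k : ℕ // 2 ≤ k ∧ k ≤ L - 1}) × (Fin m × Fin m)) ⊕ (Fin dout × Fin m)

/-- The family of all entries of the weight matrices. -/
def initEntry {Ω : Type*} (L m din dout : ℕ)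
    (W1 : Ω → Matrix (Fin m) (Fin din) ℝ)
    (Wmid : ℕ → Ω → Matrix (Fin m) (Fin m) ℝ)
    (WL : Ω → Matrix (Fin dout) (Fin m) ℝ) :
    InitIdx L m din dout → Ω → ℝ :=
  fun idx ω =>
    match idx with
    | Sum.inl p => W1 ω p.1 p.2
    | Sum.inr (Sum.inl p) => Wmid p.1.1 ω p.2.1 p.2.2
    | Sum.inr (Sum.inr p) => WL ω p.1 p.2

lemma enorm'_eq_norm {a : ℕ} (v : Fin a → ℝ) :
    enorm' v = ‖(WithLp.equiv 2 (Fin a → ℝ)).symm v‖ := by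
  rw [EuclideanSpace.norm_eq]
  simp [enorm', sq_abs]

lemma enorm'_nonneg {a : ℕ} (v : Fin a → ℝ) : 0 ≤ enorm' v := Real.sqrt_nonneg _

lemma enorm'_add_le {a : ℕ} (u v : Fin a → ℝ) : enorm' (u + v) ≤ enorm' u + enorm' v := by
  simp only [enorm'_eq_norm]
  exact norm_add_le ((WithLp.equiv 2 (Fin a → ℝ)).symm u) ((WithLp.equiv 2 (Fin a → ℝ)).symm v)

lemma enorm'_smul {a : ℕ} (c : ℝ) (v : Fin a → ℝ) : enorm' (c • v) = |c| * enorm' v := by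
  simp only [enorm'_eq_norm]
  rw [show (WithLp.equiv 2 (Fin a → ℝ)).symm (c • v) = c • (WithLp.equiv 2 (Fin a → ℝ)).symm v from rfl]
  rw [norm_smul]; simp


lemma frobSq_nonneg {a b : ℕ} (A : Matrix (Fin a) (Fin b) ℝ) : 0 ≤ frobSq A := by
  apply Finset.sum_nonneg; intro i _; apply Finset.sum_nonneg; intro j _; positivity

lemma frob_nonneg {a b : ℕ} (A : Matrix (Fin a) (Fin b) ℝ) : 0 ≤ frob A := Real.sqrt_nonneg _

/-- Crude bound: `‖A v‖ ≤ ‖A‖_F ‖v‖`. -/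
lemma enorm'_mulVec_le_frob {a b : ℕ} (A : Matrix (Fin a) (Fin b) ℝ) (v : Fin b → ℝ) :
    enorm' (A.mulVec v) ≤ frob A * enorm' v := by
  rw [enorm', frob, enorm', ← Real.sqrt_mul (frobSq_nonneg A)]
  apply Real.sqrt_le_sqrt
  rw [frobSq, Finset.sum_mul]
  apply Finset.sum_le_sum
  intro i _
  calc (A.mulVec v i) ^ 2 = (∑ j, A i j * v j) ^ 2 := by rfl
    _ ≤ (∑ j, A i j ^ 2) * ∑ j, v j ^ 2 := Finset.sum_mul_sq_le_sq_mul_sq _ _ _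

lemma bddAbove_smax {a b : ℕ} (A : Matrix (Fin a) (Fin b) ℝ) :
    BddAbove (Set.range fun v : {v : Fin b → ℝ // ∑ j, v j ^ 2 = 1} => enorm' (A.mulVec v.1)) := by
  refine ⟨frob A, ?_⟩
  rintro x ⟨⟨v, hv⟩, rfl⟩
  have : enorm' v = 1 := by rw [enorm', hv, Real.sqrt_one]
  calc enorm' (A.mulVec v) ≤ frob A * enorm' v := enorm'_mulVec_le_frob A v
    _ = frob A := by rw [this, mul_one]

lemma smax_nonneg {a b : ℕ} (A : Matrix (Fin a) (Fin b) ℝ) : 0 ≤ smax A :=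
  Real.iSup_nonneg fun v => enorm'_nonneg _

lemma smin_nonneg {a b : ℕ} (A : Matrix (Fin a) (Fin b) ℝ) : 0 ≤ smin A :=
  Real.iInf_nonneg fun v => enorm'_nonneg _

lemma smax_le {a b : ℕ} (A : Matrix (Fin a) (Fin b) ℝ) (c : ℝ) (hc : 0 ≤ c)
    (h : ∀ v : Fin b → ℝ, (∑ j, v j ^ 2) = 1 → enorm' (A.mulVec v) ≤ c) : smax A ≤ c := by
  apply Real.iSup_le _ hc
  rintro ⟨v, hv⟩
  exact h v hv

lemma le_smax {a b : ℕ} (A : Matrix (Fin a) (Fin b) ℝ) (v : Fin b → ℝ)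
    (hv : (∑ j, v j ^ 2) = 1) : enorm' (A.mulVec v) ≤ smax A :=
  le_ciSup (bddAbove_smax A) (⟨v, hv⟩ : {v : Fin b → ℝ // ∑ j, v j ^ 2 = 1})

lemma smin_le {a b : ℕ} (A : Matrix (Fin a) (Fin b) ℝ) (v : Fin b → ℝ)
    (hv : (∑ j, v j ^ 2) = 1) : smin A ≤ enorm' (A.mulVec v) :=
  ciInf_le ⟨0, by rintro x ⟨w, rfl⟩; exact enorm'_nonneg _⟩
    (⟨v, hv⟩ : {v : Fin b → ℝ // ∑ j, v j ^ 2 = 1})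

lemma smax_le_frob {a b : ℕ} (A : Matrix (Fin a) (Fin b) ℝ) : smax A ≤ frob A := by
  apply smax_le _ _ (frob_nonneg A)
  intro v hv
  have h1 : enorm' v = 1 := by rw [enorm', hv, Real.sqrt_one]
  calc enorm' (A.mulVec v) ≤ frob A * enorm' v := enorm'_mulVec_le_frob A v
    _ = frob A := by rw [h1, mul_one]

lemma enorm'_eq_zero_iff {a : ℕ} (v : Fin a → ℝ) : enorm' v = 0 ↔ v = 0 := by
  rw [enorm'_eq_norm, norm_eq_zero]
  constructor
  · intro h; funext i
    have := congrArg (fun w => w i) h; simpa using this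
  · intro h; subst h; rfl

/-- Operator-norm property: `‖A v‖ ≤ smax A * ‖v‖`. -/
lemma enorm'_mulVec_le {a b : ℕ} (A : Matrix (Fin a) (Fin b) ℝ) (v : Fin b → ℝ) :
    enorm' (A.mulVec v) ≤ smax A * enorm' v := by
  rcases eq_or_ne (enorm' v) 0 with h0 | h0
  · have hv0 : v = 0 := (enorm'_eq_zero_iff v).mp h0
    subst hv0
    rw [Matrix.mulVec_zero, h0, (enorm'_eq_zero_iff (0 : Fin a → ℝ)).mpr rfl, mul_zero]
  · have hpos : 0 < enorm' v := lt_of_le_of_ne (enorm'_nonneg v) (Ne.symm h0)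
    set c := (enorm' v)⁻¹ with hcdef
    have hc : 0 < c := inv_pos.mpr hpos
    have hu : enorm' (c • v) = 1 := by
      rw [enorm'_smul, abs_of_pos hc, hcdef]
      field_simp
    have husum : (∑ j, (c • v) j ^ 2) = 1 := by
      have h2 := hu
      rw [enorm'] at h2
      nlinarith [Real.sq_sqrt (show (0:ℝ) ≤ ∑ j, (c • v) j ^ 2 by positivity),
        Real.sqrt_nonneg (∑ j, (c • v) j ^ 2)]
    have key := le_smax A (c • v) husum
    rw [Matrix.mulVec_smul, enorm'_smul, abs_of_pos hc] at key
    have : c * enorm' (A.mulVec v) ≤ smax A := key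
    calc enorm' (A.mulVec v) = (c * enorm' (A.mulVec v)) * enorm' v := by
          rw [hcdef]; field_simp
      _ ≤ smax A * enorm' v := mul_le_mul_of_nonneg_right this (enorm'_nonneg v)

lemma smax_mul_le {a b c : ℕ} (A : Matrix (Fin a) (Fin b) ℝ) (B : Matrix (Fin b) (Fin c) ℝ) :
    smax (A * B) ≤ smax A * smax B := by
  apply smax_le _ _ (mul_nonneg (smax_nonneg A) (smax_nonneg B))
  intro v hv
  have h1 : enorm' v = 1 := by rw [enorm', hv, Real.sqrt_one]
  rw [← Matrix.mulVec_mulVec]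
  calc enorm' (A.mulVec (B.mulVec v)) ≤ smax A * enorm' (B.mulVec v) := enorm'_mulVec_le A _
    _ ≤ smax A * (smax B * enorm' v) :=
        mul_le_mul_of_nonneg_left (enorm'_mulVec_le B v) (smax_nonneg A)
    _ = smax A * smax B := by rw [h1, mul_one]

lemma smax_add_le {a b : ℕ} (A B : Matrix (Fin a) (Fin b) ℝ) :
    smax (A + B) ≤ smax A + smax B := by
  apply smax_le _ _ (add_nonneg (smax_nonneg A) (smax_nonneg B))
  intro v hv
  rw [Matrix.add_mulVec]
  calc enorm' (A.mulVec v + B.mulVec v) ≤ enorm' (A.mulVec v) + enorm' (B.mulVec v) :=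
        enorm'_add_le _ _
    _ ≤ smax A + smax B := add_le_add (le_smax A v hv) (le_smax B v hv)

lemma smax_one_le {a : ℕ} : smax (1 : Matrix (Fin a) (Fin a) ℝ) ≤ 1 := by
  apply smax_le _ _ zero_le_one
  intro v hv
  rw [Matrix.one_mulVec, enorm', hv, Real.sqrt_one]

lemma smax_sub_le {a b : ℕ} (A B : Matrix (Fin a) (Fin b) ℝ) :
    smax A ≤ smax B + smax (A - B) := by
  have : A = B + (A - B) := by abel
  calc smax A = smax (B + (A - B)) := by rw [← this]
    _ ≤ smax B + smax (A - B) := smax_add_le _ _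

lemma sphere_cond_iff {a : ℕ} (v : Fin a → ℝ) :
    (∑ j, v j ^ 2) = 1 ↔ ‖(WithLp.equiv 2 (Fin a → ℝ)).symm v‖ = 1 := by
  rw [← enorm'_eq_norm, enorm']
  constructor
  · intro h; rw [h, Real.sqrt_one]
  · intro h
    have h2 : (0:ℝ) ≤ ∑ j, v j ^ 2 := by positivity
    nlinarith [Real.sq_sqrt h2]

lemma enorm'_pos_of_ne_zero {a : ℕ} (v : Fin a → ℝ) (h : v ≠ 0) : 0 < enorm' v :=
  lt_of_le_of_ne (enorm'_nonneg v) fun h0 => h ((enorm'_eq_zero_iff v).mp h0.symm)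

/-- Full column rank implies positive least singular value. -/
lemma smin_pos_of_rank {d r : ℕ} (hr : 1 ≤ r) (X : Matrix (Fin d) (Fin r) ℝ)
    (hrank : X.rank = r) : 0 < smin X := by
  -- injectivity of mulVec
  have hinj : Function.Injective X.mulVec := by
    have hker : LinearMap.ker X.mulVecLin = ⊥ := by
      have hfr : Module.finrank ℝ (LinearMap.range X.mulVecLin) = r := hrank
      have := LinearMap.finrank_range_add_finrank_ker X.mulVecLin
      rw [hfr] at this
      simp only [Module.finrank_fintype_fun_eq_card, Fintype.card_fin] at this
      have hk0 : Module.finrank ℝ (LinearMap.ker X.mulVecLin) = 0 := by omega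
      exact Submodule.finrank_eq_zero.mp hk0
    intro u v huv
    have : X.mulVecLin u = X.mulVecLin v := huv
    exact (LinearMap.ker_eq_bot.mp hker) this
  -- min on the sphere
  let E := EuclideanSpace ℝ (Fin r)
  let f : E → ℝ := fun v => enorm' (X.mulVec ((WithLp.equiv 2 (Fin r → ℝ)) v))
  have hf : Continuous f := by
    apply Real.continuous_sqrt.comp
    apply continuous_finset_sum
    intro i _
    have : Continuous fun v : E => X.mulVec ((WithLp.equiv 2 (Fin r → ℝ)) v) i := by
      simp only [Matrix.mulVec, dotProduct]
      apply continuous_finset_sum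
      intro j _
      exact (continuous_const.mul ((continuous_apply j).comp (PiLp.continuous_ofLp (p := 2) (β := fun _ : Fin r => ℝ))))
    exact this.pow 2
  have hcs : IsCompact (Metric.sphere (0 : E) 1) := isCompact_sphere 0 1
  have hne : (Metric.sphere (0 : E) 1).Nonempty := by
    haveI : Nonempty (Fin r) := ⟨⟨0, hr⟩⟩
    haveI : Nontrivial E := inferInstanceAs (Nontrivial (PiLp 2 (fun _ : Fin r => ℝ)))
    exact NormedSpace.sphere_nonempty.mpr zero_le_one
  obtain ⟨v₀, hv₀mem, hv₀min⟩ := hcs.exists_isMinOn hne (hf.continuousOn)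
  have hv₀norm : ‖v₀‖ = 1 := by simpa using hv₀mem
  have hv₀ne : ((WithLp.equiv 2 (Fin r → ℝ)) v₀) ≠ 0 := by
    intro h
    have : v₀ = 0 := by simpa using congrArg (WithLp.equiv 2 (Fin r → ℝ)).symm h
    rw [this] at hv₀norm; simp at hv₀norm
  have hfv₀pos : 0 < f v₀ := by
    apply enorm'_pos_of_ne_zero
    intro h
    apply hv₀ne
    have := hinj (a₁ := (WithLp.equiv 2 (Fin r → ℝ)) v₀) (a₂ := 0)
    rw [Matrix.mulVec_zero] at this
    exact this h
  have : f v₀ ≤ smin X := by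
    haveI : Nonempty {v : Fin r → ℝ // ∑ j, v j ^ 2 = 1} :=
      ⟨⟨Pi.single ⟨0, hr⟩ 1, by simp [Pi.single_apply]⟩⟩
    apply le_ciInf
    rintro ⟨v, hv⟩
    have hmem : ((WithLp.equiv 2 (Fin r → ℝ)).symm v) ∈ Metric.sphere (0 : E) 1 := by
      simp only [Metric.mem_sphere, dist_zero_right]
      exact (sphere_cond_iff v).mp hv
    have := hv₀min hmem
    simpa [f] using this
  linarith

lemma smin_le_smax {d r : ℕ} (hr : 1 ≤ r) (X : Matrix (Fin d) (Fin r) ℝ) :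
    smin X ≤ smax X := by
  have hv : (∑ j, (Pi.single (⟨0, hr⟩ : Fin r) 1 : Fin r → ℝ) j ^ 2) = 1 := by
    simp [Pi.single_apply]
  exact le_trans (smin_le X _ hv) (le_smax X _ hv)

lemma unit_empty {b : ℕ} (hb : b = 0) : IsEmpty {v : Fin b → ℝ // ∑ j, v j ^ 2 = 1} := by
  subst hb
  refine ⟨fun ⟨v, hv⟩ => ?_⟩
  simp at hv

lemma smax_of_r_zero {a : ℕ} (A : Matrix (Fin a) (Fin 0) ℝ) : smax A = 0 := by
  haveI := unit_empty (b := 0) rfl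
  rw [smax, iSup, Set.range_eq_empty, Real.sSup_empty]

lemma smin_of_r_zero {a : ℕ} (A : Matrix (Fin a) (Fin 0) ℝ) : smin A = 0 := by
  haveI := unit_empty (b := 0) rfl
  rw [smin, iInf, Set.range_eq_empty, Real.sInf_empty]


lemma midProd_empty {m : ℕ} (W : ℕ → Matrix (Fin m) (Fin m) ℝ) {i j : ℕ} (h : j + 1 ≤ i) :
    midProd W i j = 1 := by
  unfold midProd
  rw [Nat.sub_eq_zero_of_le h]
  simp

lemma midProd_succ {m : ℕ} (W : ℕ → Matrix (Fin m) (Fin m) ℝ) {i j : ℕ} (h : i ≤ j + 1) :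
    midProd W i (j + 1) = W (j + 1) * midProd W i j := by
  unfold midProd
  have h1 : j + 1 + 1 - i = (j + 1 - i) + 1 := by omega
  rw [h1]
  have h2 : List.range' i (j + 1 - i + 1) = List.range' i (j + 1 - i) ++ [i + (j + 1 - i)] := by
    have := List.range'_append (s := i) (m := j + 1 - i) (n := 1) (step := 1)
    simp only [List.range'_one, Nat.mul_one] at this
    rw [← this, Nat.one_mul]
  have h3 : i + (j + 1 - i) = j + 1 := by omega
  rw [h2, h3]
  simp [List.reverse_append]

lemma pow_one_add_le {q : ℝ} (hq : 0 ≤ q) :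
    ∀ n : ℕ, 2 * n * q ≤ 1 → (1 + q) ^ n ≤ 1 + 2 * n * q := by
  intro n
  induction n with
  | zero => intro _; norm_num
  | succ n ih =>
    intro h
    push_cast at h ⊢
    have hn : 2 * (n:ℝ) * q ≤ 1 := by nlinarith [Nat.cast_nonneg (α := ℝ) n]
    have ihn := ih (by push_cast; linarith)
    push_cast at ihn
    have h1q : (0:ℝ) ≤ 1 + q := by linarith
    calc (1 + q) ^ (n + 1) = (1 + q) ^ n * (1 + q) := by ring
      _ ≤ (1 + 2 * n * q) * (1 + q) := mul_le_mul_of_nonneg_right ihn h1q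
      _ ≤ 1 + 2 * ((n:ℝ) + 1) * q := by nlinarith [Nat.cast_nonneg (α := ℝ) n]

lemma smax_zero {a b : ℕ} : smax (0 : Matrix (Fin a) (Fin b) ℝ) = 0 := by
  refine le_antisymm ?_ (smax_nonneg _)
  apply smax_le _ _ le_rfl
  intro v _
  rw [Matrix.zero_mulVec, (enorm'_eq_zero_iff (0 : Fin a → ℝ)).mpr rfl]

lemma smax_sum_le {a b : ℕ} {ι : Type*} (s : Finset ι) (f : ι → Matrix (Fin a) (Fin b) ℝ) :
    smax (∑ k ∈ s, f k) ≤ ∑ k ∈ s, smax (f k) := by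
  classical
  induction s using Finset.induction with
  | empty => simp [smax_zero]
  | insert a s h ih =>
    rw [Finset.sum_insert h, Finset.sum_insert h]
    exact le_trans (smax_add_le _ _) (by linarith)

lemma claim_identity {m din r : ℕ}
    (Wmid0 : ℕ → Matrix (Fin m) (Fin m) ℝ) (W10 : Matrix (Fin m) (Fin din) ℝ)
    (Δ1 : Matrix (Fin m) (Fin din) ℝ) (Δmid : ℕ → Matrix (Fin m) (Fin m) ℝ)
    (X : Matrix (Fin din) (Fin r) ℝ) :
    ∀ i, 1 ≤ i →
      midProd (fun k => Wmid0 k + Δmid k) 2 i * (W10 + Δ1) * X - midProd Wmid0 2 i * W10 * X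
        = ∑ k ∈ Finset.range i, midProd Wmid0 (k + 2) i *
            (if k = 0 then Δ1 * X
             else Δmid (k + 1) *
               (midProd (fun k => Wmid0 k + Δmid k) 2 k * (W10 + Δ1) * X)) := by
  intro i
  induction i with
  | zero => omega
  | succ n ih =>
    intro _
    rcases Nat.eq_zero_or_pos n with hn | hn
    · subst hn
      rw [midProd_empty _ (by omega), midProd_empty _ (by omega)]
      simp [Matrix.add_mul, midProd_empty]
    · have hid := ih hn
      rw [midProd_succ _ (by omega : 2 ≤ n + 1), midProd_succ _ (by omega : 2 ≤ n + 1)]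
      have expand :
          (Wmid0 (n+1) + Δmid (n+1)) * midProd (fun k => Wmid0 k + Δmid k) 2 n * (W10 + Δ1) * X
            - Wmid0 (n+1) * midProd Wmid0 2 n * W10 * X
          = Wmid0 (n+1) *
              (midProd (fun k => Wmid0 k + Δmid k) 2 n * (W10 + Δ1) * X
                - midProd Wmid0 2 n * W10 * X)
            + Δmid (n+1) * (midProd (fun k => Wmid0 k + Δmid k) 2 n * (W10 + Δ1) * X) := by
        simp only [Matrix.add_mul, Matrix.mul_sub, Matrix.mul_assoc]
        abel
      rw [expand, hid, Matrix.mul_sum, Finset.sum_range_succ]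
      congr 1
      · apply Finset.sum_congr rfl
        intro k hk
        have hk' : k < n := Finset.mem_range.mp hk
        rw [← Matrix.mul_assoc, ← midProd_succ Wmid0 (by omega : k + 2 ≤ n + 1)]
      · have hne : n ≠ 0 := by omega
        rw [if_neg hne, midProd_empty Wmid0 (by omega : n + 1 + 1 ≤ n + 2), Matrix.one_mul]

lemma claim_bound {m din r L : ℕ} (hL : 2 ≤ L) (hm1 : 1 ≤ m)
    (K R : ℝ) (hK : 1 ≤ K) (hR : 0 < R)
    (X : Matrix (Fin din) (Fin r) ℝ)
    (W10 : Matrix (Fin m) (Fin din) ℝ) (Wmid0 : ℕ → Matrix (Fin m) (Fin m) ℝ)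
    (Δ1 : Matrix (Fin m) (Fin din) ℝ) (Δmid : ℕ → Matrix (Fin m) (Fin m) ℝ)
    (hyp1 : ∀ a b : ℕ, 1 < a → a ≤ b → b < L →
      smax (midProd Wmid0 a b) ≤ K * Real.sqrt L * (m : ℝ) ^ (((b : ℝ) - a + 1) / 2))
    (hyp2 : ∀ a : ℕ, 1 ≤ a → a < L →
      smax (midProd Wmid0 2 a * W10 * X) ≤ 1.2 * (m : ℝ) ^ ((a : ℝ) / 2) * smax X)
    (hΔ1 : frob Δ1 ≤ R) (hΔmid : ∀ k, 2 ≤ k → k ≤ L - 1 → frob (Δmid k) ≤ R) :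
    ∀ i : ℕ, 1 ≤ i → i < L →
      smax (midProd (fun k => Wmid0 k + Δmid k) 2 i * (W10 + Δ1) * X
          - midProd Wmid0 2 i * W10 * X)
        ≤ ((1 + K * Real.sqrt L * R / Real.sqrt m) ^ i - 1)
            * (1.2 * (m : ℝ) ^ ((i : ℝ) / 2) * smax X) := by
  set q : ℝ := K * Real.sqrt L * R / Real.sqrt m with hqdef
  have hmpos : (0:ℝ) < m := by exact_mod_cast Nat.lt_of_lt_of_le Nat.zero_lt_one hm1
  have hsm : 0 < Real.sqrt m := Real.sqrt_pos.mpr hmpos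
  have hsL1 : 1 ≤ Real.sqrt L := by
    rw [show (1:ℝ) = Real.sqrt 1 from Real.sqrt_one.symm]
    apply Real.sqrt_le_sqrt
    exact_mod_cast Nat.one_le_of_lt hL
  have hq : 0 < q := by
    apply div_pos _ hsm
    have h1 : (0:ℝ) < K := by linarith
    have h2 : (0:ℝ) < Real.sqrt L := by linarith
    exact mul_pos (mul_pos h1 h2) hR
  have hσM : 0 ≤ smax X := smax_nonneg X
  intro i
  induction i using Nat.strong_induction_on with
  | _ i IH =>
    intro hi1 hiL
    rw [claim_identity Wmid0 W10 Δ1 Δmid X i hi1]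
    set c : ℝ := 1.2 * smax X * (K * Real.sqrt L * R) * (m:ℝ) ^ (((i:ℝ) - 1)/2) with hcdef
    have hblock : ∀ k, k < i → smax (midProd Wmid0 (k+2) i)
        ≤ K * Real.sqrt L * (m:ℝ) ^ (((i:ℝ) - k - 1)/2) := by
      intro k hk
      rcases lt_or_ge (k+1) i with h | h
      · have hb := hyp1 (k+2) i (by omega) (by omega) hiL
        have hexp : (((i:ℕ):ℝ) - ((k+2:ℕ):ℝ) + 1)/2 = ((i:ℝ) - k - 1)/2 := by
          push_cast; ring
        rw [hexp] at hb
        exact hb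
      · have hki : k + 1 = i := by omega
        rw [midProd_empty Wmid0 (by omega : i + 1 ≤ k + 2)]
        have hicast : (i:ℝ) = (k:ℝ) + 1 := by exact_mod_cast congrArg Nat.cast hki.symm
        have hexp : ((i:ℝ) - k - 1)/2 = 0 := by rw [hicast]; ring
        rw [hexp, Real.rpow_zero, mul_one]
        calc smax (1 : Matrix (Fin m) (Fin m) ℝ) ≤ 1 := smax_one_le
          _ ≤ K * Real.sqrt L := by nlinarith
    have hterm : ∀ k, k < i →
        smax (if k = 0 then Δ1 * X
          else Δmid (k + 1) * (midProd (fun j => Wmid0 j + Δmid j) 2 k * (W10 + Δ1) * X))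
        ≤ R * (1.2 * (m:ℝ) ^ ((k:ℝ)/2) * smax X) * (1+q)^k := by
      intro k hk
      rcases Nat.eq_zero_or_pos k with hk0 | hk1
      · subst hk0
        rw [if_pos rfl]
        simp only [Nat.cast_zero, zero_div, Real.rpow_zero, pow_zero, mul_one]
        calc smax (Δ1 * X) ≤ smax Δ1 * smax X := smax_mul_le _ _
          _ ≤ R * smax X := by
              apply mul_le_mul_of_nonneg_right _ hσM
              exact le_trans (smax_le_frob Δ1) hΔ1
          _ ≤ R * (1.2 * 1 * smax X) := by nlinarith
          _ = R * (1.2 * smax X) := by ring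
      · rw [if_neg (by omega)]
        have hkL : k < L := by omega
        have hBot : smax (midProd Wmid0 2 k * W10 * X) ≤ 1.2 * (m:ℝ)^((k:ℝ)/2) * smax X :=
          hyp2 k hk1 hkL
        have hD := IH k hk hk1 hkL
        have hBot' : smax (midProd (fun j => Wmid0 j + Δmid j) 2 k * (W10 + Δ1) * X)
            ≤ (1+q)^k * (1.2 * (m:ℝ)^((k:ℝ)/2) * smax X) := by
          calc smax (midProd (fun j => Wmid0 j + Δmid j) 2 k * (W10 + Δ1) * X)
              ≤ smax (midProd Wmid0 2 k * W10 * X)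
                + smax (midProd (fun j => Wmid0 j + Δmid j) 2 k * (W10 + Δ1) * X
                    - midProd Wmid0 2 k * W10 * X) := smax_sub_le _ _
            _ ≤ 1.2 * (m:ℝ)^((k:ℝ)/2) * smax X
                + ((1+q)^k - 1) * (1.2 * (m:ℝ)^((k:ℝ)/2) * smax X) := add_le_add hBot hD
            _ = (1+q)^k * (1.2 * (m:ℝ)^((k:ℝ)/2) * smax X) := by ring
        have hfrob : smax (Δmid (k+1)) ≤ R := by
          refine le_trans (smax_le_frob _) (hΔmid (k+1) (by omega) (by omega))
        calc smax (Δmid (k + 1) * (midProd (fun j => Wmid0 j + Δmid j) 2 k * (W10 + Δ1) * X))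
            ≤ smax (Δmid (k+1)) * smax (midProd (fun j => Wmid0 j + Δmid j) 2 k * (W10 + Δ1) * X) :=
              smax_mul_le _ _
          _ ≤ R * ((1+q)^k * (1.2 * (m:ℝ)^((k:ℝ)/2) * smax X)) := by
              apply mul_le_mul hfrob hBot' (smax_nonneg _) (le_of_lt hR)
          _ = R * (1.2 * (m:ℝ)^((k:ℝ)/2) * smax X) * (1+q)^k := by ring
    have hc : ∀ k:ℕ, (K * Real.sqrt L * (m:ℝ) ^ (((i:ℝ) - k - 1)/2))
        * (R * (1.2 * (m:ℝ)^((k:ℝ)/2) * smax X) * (1+q)^k) = c * (1+q)^k := by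
      intro k
      have hmm : (m:ℝ) ^ (((i:ℝ) - k - 1)/2) * (m:ℝ)^((k:ℝ)/2) = (m:ℝ) ^ (((i:ℝ)-1)/2) := by
        rw [← Real.rpow_add hmpos]; congr 1; ring
      calc (K * Real.sqrt L * (m:ℝ) ^ (((i:ℝ) - k - 1)/2))
            * (R * (1.2 * (m:ℝ)^((k:ℝ)/2) * smax X) * (1+q)^k)
          = (1.2 * smax X * (K * Real.sqrt L * R))
            * ((m:ℝ) ^ (((i:ℝ) - k - 1)/2) * (m:ℝ)^((k:ℝ)/2)) * (1+q)^k := by ring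
        _ = c * (1+q)^k := by rw [hmm, hcdef]
    have hcq : c = q * (1.2 * (m:ℝ)^((i:ℝ)/2) * smax X) := by
      have hsplit : (m:ℝ)^((i:ℝ)/2) = (m:ℝ)^(((i:ℝ)-1)/2) * (m:ℝ)^((1:ℝ)/2) := by
        rw [← Real.rpow_add hmpos]; congr 1; ring
      have hne : ((m:ℝ)^((1:ℝ)/2)) ≠ 0 := (Real.rpow_pos_of_pos hmpos _).ne'
      rw [hcdef, hqdef, hsplit]
      simp only [Real.sqrt_eq_rpow]
      field_simp
    have hsum : ∑ k ∈ Finset.range i, c * (1+q)^k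
        = ((1+q)^i - 1) * (1.2 * (m:ℝ)^((i:ℝ)/2) * smax X) := by
      rw [← Finset.mul_sum, geom_sum_eq (by intro h; nlinarith : (1:ℝ) + q ≠ 1) i,
        show (1:ℝ) + q - 1 = q by ring, hcq]
      field_simp
    calc smax (∑ k ∈ Finset.range i, midProd Wmid0 (k + 2) i *
            (if k = 0 then Δ1 * X
             else Δmid (k + 1) * (midProd (fun j => Wmid0 j + Δmid j) 2 k * (W10 + Δ1) * X)))
        ≤ ∑ k ∈ Finset.range i, smax (midProd Wmid0 (k + 2) i *
            (if k = 0 then Δ1 * X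
             else Δmid (k + 1) * (midProd (fun j => Wmid0 j + Δmid j) 2 k * (W10 + Δ1) * X))) :=
          smax_sum_le _ _
      _ ≤ ∑ k ∈ Finset.range i, c * (1+q)^k := by
          apply Finset.sum_le_sum
          intro k hk
          have hk' : k < i := Finset.mem_range.mp hk
          rw [← hc k]
          refine le_trans (smax_mul_le _ _) ?_
          apply mul_le_mul (hblock k hk') (hterm k hk') (smax_nonneg _)
          positivity
      _ = ((1+q)^i - 1) * (1.2 * (m:ℝ)^((i:ℝ)/2) * smax X) := hsum

/-- perturbation bound for the bottom partial products applied to the data. -/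
theorem perturbation_bottom_products :
    ∀ K : ℝ, 1 ≤ K → ∃ C > (0 : ℝ),
      ∀ (L m din dout r : ℕ), 2 ≤ L → 1 ≤ m → 1 ≤ din → 1 ≤ dout → dout ≤ m →
      ∀ X : Matrix (Fin din) (Fin r) ℝ, X.rank = r →
      ∀ (W10 : Matrix (Fin m) (Fin din) ℝ) (Wmid0 : ℕ → Matrix (Fin m) (Fin m) ℝ)
        (WL0 : Matrix (Fin dout) (Fin m) ℝ),
      (∀ a b : ℕ, 1 < a → a ≤ b → b < L →
        smax (midProd Wmid0 a b) ≤ K * Real.sqrt L * (m : ℝ) ^ (((b : ℝ) - a + 1) / 2)) →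
      (∀ a : ℕ, 1 ≤ a → a < L →
        smax (midProd Wmid0 2 a * W10 * X) ≤ 1.2 * (m : ℝ) ^ ((a : ℝ) / 2) * smax X) →
      ∀ R : ℝ, 0 < R →
      ∀ (Δ1 : Matrix (Fin m) (Fin din) ℝ) (Δmid : ℕ → Matrix (Fin m) (Fin m) ℝ)
        (ΔL : Matrix (Fin dout) (Fin m) ℝ),
      frob Δ1 ≤ R → (∀ k, 2 ≤ k → k ≤ L - 1 → frob (Δmid k) ≤ R) → frob ΔL ≤ R →
      (m : ℝ) ≥ C * L ^ 3 * R ^ 2 * (smax X ^ 2 / smin X ^ 2) →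
      ∀ i : ℕ, 1 ≤ i → i < L →
        smax ((midProd (fun k => Wmid0 k + Δmid k) 2 i * (W10 + Δ1) -
            midProd Wmid0 2 i * W10) * X) ≤
          0.05 * (m : ℝ) ^ ((i : ℝ) / 2) * smin X := by
  intro K hK
  refine ⟨2304 * K ^ 2, by nlinarith, ?_⟩
  intro L m din dout r hL hm1 hdin hdout hdoutm X hrank W10 Wmid0 WL0 hyp1 hyp2 R hR
    Δ1 Δmid ΔL hΔ1 hΔmid hΔL hmbig i hi1 hiL
  rcases Nat.eq_zero_or_pos r with hr0 | hr1
  · subst hr0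
    rw [smax_of_r_zero, smin_of_r_zero]
    simp
  -- main case
  have hσm : 0 < smin X := smin_pos_of_rank hr1 X hrank
  have hσMm : smin X ≤ smax X := smin_le_smax hr1 X
  have hσM : 0 < smax X := lt_of_lt_of_le hσm hσMm
  have hKpos : (0:ℝ) < K := by linarith
  have hmpos : (0:ℝ) < m := by exact_mod_cast Nat.lt_of_lt_of_le Nat.zero_lt_one hm1
  have hsm : 0 < Real.sqrt m := Real.sqrt_pos.mpr hmpos
  have hLpos : (0:ℝ) < L := by exact_mod_cast Nat.lt_of_lt_of_le Nat.zero_lt_two hL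
  have hsL : 0 < Real.sqrt L := Real.sqrt_pos.mpr hLpos
  have hsL1 : 1 ≤ Real.sqrt L := by
    rw [show (1:ℝ) = Real.sqrt 1 from Real.sqrt_one.symm]
    apply Real.sqrt_le_sqrt
    exact_mod_cast Nat.one_le_of_lt hL
  set q : ℝ := K * Real.sqrt L * R / Real.sqrt m with hqdef
  have hq : 0 < q := div_pos (mul_pos (mul_pos hKpos hsL) hR) hsm
  -- √m ≥ 48 K L √L R σM/σm
  have hxpos : 0 < 48 * K * (L:ℝ) * Real.sqrt L * R * (smax X / smin X) := by
    have h1 : 0 < smax X / smin X := div_pos hσM hσm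
    positivity
  have hsqrt : 48 * K * (L:ℝ) * Real.sqrt L * R * (smax X / smin X) ≤ Real.sqrt m := by
    rw [Real.le_sqrt (le_of_lt hxpos) (le_of_lt hmpos)]
    have hsq : Real.sqrt (L:ℝ) ^ 2 = (L:ℝ) := Real.sq_sqrt (le_of_lt hLpos)
    have hexp : (48 * K * (L:ℝ) * Real.sqrt L * R * (smax X / smin X)) ^ 2
        = 2304 * K ^ 2 * (L:ℝ) ^ 3 * R ^ 2 * (smax X ^ 2 / smin X ^ 2) := by
      rw [show (48 * K * (L:ℝ) * Real.sqrt L * R * (smax X / smin X)) ^ 2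
          = 2304 * K ^ 2 * (L:ℝ) ^ 2 * (Real.sqrt L ^ 2) * R ^ 2 * (smax X / smin X) ^ 2 by ring,
        hsq, div_pow]
      ring
    rw [hexp]
    calc (2304 * K ^ 2 * (L:ℝ) ^ 3 * R ^ 2 * (smax X ^ 2 / smin X ^ 2) : ℝ)
        = 2304 * K ^ 2 * (L:ℕ) ^ 3 * R ^ 2 * (smax X ^ 2 / smin X ^ 2) := by push_cast; ring
      _ ≤ (m:ℝ) := hmbig
  have hql' : q * (48 * (L:ℝ) * smax X) ≤ smin X := by
    have h1 : q ≤ K * Real.sqrt L * R / (48 * K * (L:ℝ) * Real.sqrt L * R * (smax X / smin X)) := by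
      rw [hqdef]
      exact div_le_div_of_nonneg_left (by positivity) hxpos hsqrt
    have h2 : K * Real.sqrt L * R / (48 * K * (L:ℝ) * Real.sqrt L * R * (smax X / smin X))
        = smin X / (48 * (L:ℝ) * smax X) := by
      field_simp
    rw [h2] at h1
    rw [← le_div_iff₀ (by positivity)]
    exact h1
  -- apply claim_bound
  rw [Matrix.sub_mul]
  have hbound := claim_bound hL hm1 K R hK hR X W10 Wmid0 Δ1 Δmid hyp1 hyp2 hΔ1 hΔmid i hi1 hiL
  rw [← hqdef] at hbound
  have hiL' : (i:ℝ) ≤ (L:ℝ) := by exact_mod_cast le_of_lt hiL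
  have h2iq : 2 * (i:ℝ) * q ≤ 1 := by
    nlinarith [mul_le_mul_of_nonneg_right hiL' (le_of_lt hq), hσMm, hσM, hσm]
  have hpow := pow_one_add_le (le_of_lt hq) i h2iq
  set P : ℝ := (m:ℝ) ^ ((i:ℝ)/2) with hPdef
  have hP : 0 < P := Real.rpow_pos_of_pos hmpos _
  have hchain : ((1 + q) ^ i - 1) * (1.2 * P * smax X) ≤ 0.05 * P * smin X := by
    have ht : (1 + q) ^ i - 1 ≤ 2 * (i:ℝ) * q := by linarith
    have ht2 : 2 * (i:ℝ) * q ≤ 2 * (L:ℝ) * q := by nlinarith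
    calc ((1 + q) ^ i - 1) * (1.2 * P * smax X)
        ≤ (2 * (i:ℝ) * q) * (1.2 * P * smax X) := by
          apply mul_le_mul_of_nonneg_right ht (by positivity)
      _ ≤ (2 * (L:ℝ) * q) * (1.2 * P * smax X) := by
          apply mul_le_mul_of_nonneg_right ht2 (by positivity)
      _ = (1/20) * (P * (q * (48 * (L:ℝ) * smax X))) := by ring
      _ ≤ (1/20) * (P * smin X) := by
          have h := mul_le_mul_of_nonneg_left hql' (le_of_lt hP)
          linarith
      _ = 0.05 * P * smin X := by ring
  linarith [hbound]
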